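/- Let X be a finite metric space with pairwise distinct distances: whenever e and e′ are distinct 2-element subsets of X, diam e ≠ diam e′. Let ≤ be a linear order on the nonempty subsets of X extending the face relation (σ ⊆ τ implies σ ≤ τ) and refining the diameter order (diam σ < diam τ implies σ < τ). Let σ ⊆ X with |σ| = 2, and let τ be the minimum, with respect to ≤, among the 3-element subsets of X containing σ. If diam τ = diam σ, then (σ, τ) is an apparent pair of ≤: σ is the maximum facet of τ, and τ is the minimum cofacet of σ. -/
import Mathlib


/-- The diameter of a finite subset of a metric space. -/
noncomputable def fdiam {X : Type*} [MetricSpace X] (S : Finset X) : ℝ :=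
  Metric.diam (S : Set X)

lemma fdiam_mono {X : Type*} [MetricSpace X] {S T : Finset X} (h : S ⊆ T) :
    fdiam S ≤ fdiam T :=
  Metric.diam_mono (by exact_mod_cast h) (T.finite_toSet.isBounded)

/-- Let `X` be a finite metric space with pairwise distinct distances and `le`
a linear order on the nonempty subsets of `X` extending the face relation and
refining the diameter order. If `σ` is an edge (a 2-element subset), `τ` is the
minimum 3-element subset containing `σ`, and `diam τ = diam σ`, then `(σ, τ)`
is an apparent pair: `σ` is the maximum facet of `τ` and `τ` is the minimum
cofacet of `σ`. -/
theorem stmt11 {X : Type*} [Fintype X] [MetricSpace X]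
    (hdist : ∀ e e' : Finset X, e.card = 2 → e'.card = 2 → e ≠ e' →
      fdiam e ≠ fdiam e')
    (le : Finset X → Finset X → Prop)
    (hrefl : ∀ σ : Finset X, σ.Nonempty → le σ σ)
    (htrans : ∀ σ τ ρ : Finset X, σ.Nonempty → τ.Nonempty → ρ.Nonempty →
      le σ τ → le τ ρ → le σ ρ)
    (hantisymm : ∀ σ τ : Finset X, σ.Nonempty → τ.Nonempty → le σ τ → le τ σ → σ = τ)
    (htotal : ∀ σ τ : Finset X, σ.Nonempty → τ.Nonempty → le σ τ ∨ le τ σ)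
    (hface : ∀ σ τ : Finset X, σ.Nonempty → τ.Nonempty → σ ⊆ τ → le σ τ)
    (hdiam : ∀ σ τ : Finset X, σ.Nonempty → τ.Nonempty →
      fdiam σ < fdiam τ → le σ τ ∧ ¬ le τ σ)
    (σ τ : Finset X) (hσ : σ.card = 2)
    (hτ : τ.card = 3 ∧ σ ⊆ τ)
    (hmin : ∀ τ' : Finset X, τ'.card = 3 → σ ⊆ τ' → le τ τ')
    (hzero : fdiam τ = fdiam σ) :
    (∀ σ' : Finset X, σ'.Nonempty → σ' ⊆ τ → τ.card = σ'.card + 1 → le σ' σ) ∧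
    (∀ τ' : Finset X, σ ⊆ τ' → τ'.card = σ.card + 1 → le τ τ') := by
  obtain ⟨hτ3, hστ⟩ := hτ
  have hσne : σ.Nonempty := Finset.card_pos.mp (by omega)
  constructor
  · intro σ' hσ'ne hsub hcard
    have hσ'2 : σ'.card = 2 := by omega
    by_cases h : σ' = σ
    · exact h ▸ hrefl σ hσne
    · have hlt : fdiam σ' < fdiam σ := by
        have h1 : fdiam σ' ≤ fdiam τ := fdiam_mono hsub
        rw [hzero] at h1
        exact lt_of_le_of_ne h1 (hdist σ' σ hσ'2 hσ h)
      exact (hdiam σ' σ hσ'ne hσne hlt).1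
  · intro τ' hsub hcard
    exact hmin τ' (by omega) hsub
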